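/- For the complete graph K_{ab} on ab vertices with the homogeneous partition π into a cells of size b, and any positive integer j, the π-join M_j(A) is a DSRG with parameter set (ja²b + ab, jab + ab − 1, jb + ab − 1, jb + ab − 2, jb + b). -/

import Mathlib

open Matrix

/-- The all-ones matrix. -/
def onesMat (n : ℕ) : Matrix (Fin n) (Fin n) ℝ := Matrix.of fun _ _ => 1

/-- The all-ones matrix indexed by blocks. -/
def Jbig (N n : ℕ) : Matrix (Fin N × Fin n) (Fin N × Fin n) ℝ := Matrix.of fun _ _ => 1

/-- `Ublk a b i`: columns in the `i`-th cell are all-ones, other entries zero. -/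
def Ublk (a b : ℕ) (i : ℕ) : Matrix (Fin (a * b)) (Fin (a * b)) ℝ :=
  Matrix.of fun _ c => if (c : ℕ) / b = i then 1 else 0

/-- The π-join of `A` in power `j`: the block-circulant matrix of block order
`j*a+1` whose first block-row is `(A, U₁,…,U₁, U₂,…,U₂, …, U_a,…,U_a)`,
each `Uᵢ` repeated `j` times. -/
def Mjoin (a b j : ℕ) (A : Matrix (Fin (a * b)) (Fin (a * b)) ℝ) :
    Matrix (Fin (j * a + 1) × Fin (a * b)) (Fin (j * a + 1) × Fin (a * b)) ℝ :=
  fun p q =>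
    if q.1 - p.1 = 0 then A p.2 q.2
    else Ublk a b ((((q.1 - p.1 : Fin (j * a + 1)) : ℕ) - 1) / j) p.2 q.2

lemma sum_range_div (a b i : ℕ) (hb : 0 < b) (hi : i < a) :
    ∑ x ∈ Finset.range (a * b), (if x / b = i then (1:ℝ) else 0) = b := by
  rw [Finset.sum_boole]
  have h : (Finset.range (a * b)).filter (fun x => x / b = i)
      = Finset.Ico (i * b) (i * b + b) := by
    ext x
    simp only [Finset.mem_filter, Finset.mem_range, Finset.mem_Ico]
    constructor
    · rintro ⟨hx, rfl⟩
      refine ⟨Nat.div_mul_le_self x b, ?_⟩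
      have h2 : x < (x / b + 1) * b := (Nat.div_lt_iff_lt_mul hb).mp (Nat.lt_succ_self _)
      rw [add_mul, one_mul] at h2
      exact h2
    · rintro ⟨h1, h2⟩
      have hib : (i + 1) * b ≤ a * b := Nat.mul_le_mul_right b hi
      rw [add_mul, one_mul] at hib
      refine ⟨by omega, Nat.div_eq_of_lt_le h1 (by rw [add_mul, one_mul]; exact h2)⟩
  rw [h, Nat.card_Ico]
  norm_num

lemma sum_fin_div (a b i : ℕ) (hb : 0 < b) (hi : i < a) :
    ∑ x : Fin (a * b), (if (x : ℕ) / b = i then (1:ℝ) else 0) = b := by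
  rw [Fin.sum_univ_eq_sum_range (fun x => if x / b = i then (1:ℝ) else 0)]
  exact sum_range_div a b i hb hi

lemma sum_fin_shift (a j i : ℕ) (hj : 0 < j) (hi : i < a) (c w : ℝ) :
    ∑ s : Fin (j * a + 1),
      (if s = 0 then c else if ((s : ℕ) - 1) / j = i then w else 0)
      = c + j * w := by
  have hv : ∀ s : Fin (j * a + 1),
      (if s = 0 then c else if ((s : ℕ) - 1) / j = i then w else 0)
      = (fun x : ℕ => if x = 0 then c else if (x - 1) / j = i then w else 0) (s : ℕ) := by
    intro s
    by_cases hs : s = 0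
    · subst hs; simp
    · have hs' : (s : ℕ) ≠ 0 := fun h => hs (Fin.ext (by rw [h]; simp))
      simp [hs, hs']
  rw [Finset.sum_congr rfl (fun s _ => hv s),
    Fin.sum_univ_eq_sum_range (fun x : ℕ => if x = 0 then c else if (x - 1) / j = i then w else 0),
    Finset.sum_range_succ']
  simp only [Nat.add_sub_cancel, Nat.succ_ne_zero, if_false, if_pos rfl]
  have h : ∑ x ∈ Finset.range (j * a), (if x / j = i then w else 0)
      = w * ∑ x ∈ Finset.range (j * a), (if x / j = i then (1:ℝ) else 0) := by
    rw [Finset.mul_sum]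
    exact Finset.sum_congr rfl fun x _ => by split <;> ring
  rw [h, mul_comm j a, sum_range_div a j i hj hi]
  norm_num
  ring

lemma Mjoin_apply (a b j : ℕ) (p1 q1 : Fin (j * a + 1)) (p2 q2 : Fin (a * b)) :
    Mjoin a b j (onesMat (a * b) - 1) (p1, p2) (q1, q2)
      = if q1 - p1 = 0 then (1 - if p2 = q2 then (1:ℝ) else 0)
        else if (q2 : ℕ) / b = (((q1 - p1 : Fin (j * a + 1)) : ℕ) - 1) / j then 1 else 0 := by
  simp [Mjoin, Ublk, onesMat, Matrix.sub_apply, Matrix.one_apply]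

lemma S1 (a b : ℕ) (p2 : Fin (a * b)) :
    ∑ r2 : Fin (a * b), (1 - (if p2 = r2 then (1:ℝ) else 0)) = (a : ℝ) * b - 1 := by
  rw [Finset.sum_sub_distrib]
  simp [Finset.card_univ, Finset.sum_ite_eq]

lemma S1' (a b : ℕ) (q2 : Fin (a * b)) :
    ∑ r2 : Fin (a * b), (1 - (if r2 = q2 then (1:ℝ) else 0)) = (a : ℝ) * b - 1 := by
  rw [Finset.sum_sub_distrib]
  simp [Finset.card_univ, Finset.sum_ite_eq']

lemma S4 (a b : ℕ) (p2 q2 : Fin (a * b)) :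
    ∑ r2 : Fin (a * b),
      (1 - (if p2 = r2 then (1:ℝ) else 0)) * (1 - (if r2 = q2 then (1:ℝ) else 0))
      = (a : ℝ) * b - 2 + (if p2 = q2 then (1:ℝ) else 0) := by
  have h : ∀ r2 : Fin (a * b),
      (1 - (if p2 = r2 then (1:ℝ) else 0)) * (1 - (if r2 = q2 then (1:ℝ) else 0))
      = 1 - (if p2 = r2 then (1:ℝ) else 0) - (if r2 = q2 then (1:ℝ) else 0)
        + (if p2 = r2 then (if r2 = q2 then (1:ℝ) else 0) else 0) := by
    intro r2; by_cases h1 : p2 = r2 <;> by_cases h2 : r2 = q2 <;> simp [h1, h2]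
  rw [Finset.sum_congr rfl fun r2 _ => h r2]
  rw [Finset.sum_add_distrib, Finset.sum_sub_distrib, Finset.sum_sub_distrib]
  simp [Finset.sum_ite_eq, Finset.sum_ite_eq', Finset.card_univ]
  ring

lemma S3 (a b : ℕ) (hb : 0 < b) (i : ℕ) (hi : i < a) (q2 : Fin (a * b)) :
    ∑ r2 : Fin (a * b),
      (if (r2 : ℕ) / b = i then (1:ℝ) else 0) * (1 - (if r2 = q2 then (1:ℝ) else 0))
      = (b : ℝ) - (if (q2 : ℕ) / b = i then (1:ℝ) else 0) := by
  have h : ∀ r2 : Fin (a * b),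
      (if (r2 : ℕ) / b = i then (1:ℝ) else 0) * (1 - (if r2 = q2 then (1:ℝ) else 0))
      = (if (r2 : ℕ) / b = i then (1:ℝ) else 0)
        - (if r2 = q2 then (if (r2 : ℕ) / b = i then (1:ℝ) else 0) else 0) := by
    intro r2; by_cases h1 : (r2 : ℕ) / b = i <;> by_cases h2 : r2 = q2 <;> simp [h1, h2]
  rw [Finset.sum_congr rfl fun r2 _ => h r2, Finset.sum_sub_distrib,
    sum_fin_div a b i hb hi]
  simp [Finset.sum_ite_eq']

lemma hiub (a j : ℕ) (ha : 0 < a) (hj : 0 < j) (s : Fin (j * a + 1)) :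
    ((s : ℕ) - 1) / j < a := by
  rw [Nat.div_lt_iff_lt_mul hj]
  have h2 : (s : ℕ) ≤ j * a := Nat.lt_succ_iff.mp s.isLt
  have h1 : (s : ℕ) - 1 < j * a :=
    lt_of_le_of_lt (Nat.sub_le_sub_right h2 1) (Nat.sub_lt (Nat.mul_pos hj ha) one_pos)
  exact lt_of_lt_of_eq h1 (mul_comm j a)

lemma hq2lt (a b : ℕ) (hb : 0 < b) (q2 : Fin (a * b)) : (q2 : ℕ) / b < a := by
  rw [Nat.div_lt_iff_lt_mul hb]
  exact q2.isLt

lemma M2sum (a b j : ℕ) (ha : 0 < a) (hb : 0 < b) (hj : 0 < j)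
    (p1 q1 : Fin (j * a + 1)) (p2 q2 : Fin (a * b)) :
    ∑ r : Fin (j * a + 1) × Fin (a * b),
      Mjoin a b j (onesMat (a * b) - 1) (p1, p2) r *
        Mjoin a b j (onesMat (a * b) - 1) r (q1, q2)
    = if q1 - p1 = 0
      then (a : ℝ) * b - 2 + (if p2 = q2 then (1:ℝ) else 0) + (j : ℝ) * b
      else ((a : ℝ) * b - 1) *
            (if (q2 : ℕ) / b = (((q1 - p1 : Fin (j * a + 1)) : ℕ) - 1) / j then (1:ℝ) else 0)
          + ((b : ℝ) -
            (if (q2 : ℕ) / b = (((q1 - p1 : Fin (j * a + 1)) : ℕ) - 1) / j then (1:ℝ) else 0))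
          + (b : ℝ) * (j : ℝ)
          - (b : ℝ) *
            (if (q2 : ℕ) / b = (((q1 - p1 : Fin (j * a + 1)) : ℕ) - 1) / j then (1:ℝ) else 0) := by
  rw [Fintype.sum_prod_type]
  set t : Fin (j * a + 1) := q1 - p1 with ht
  set E : ℝ := (if (q2 : ℕ) / b = (((t : Fin (j * a + 1)) : ℕ) - 1) / j then (1:ℝ) else 0)
    with hE
  set F : Fin (j * a + 1) → ℝ := fun s =>
      if s = 0 then
        (if t = 0 then (a : ℝ) * b - 2 + (if p2 = q2 then (1:ℝ) else 0)
         else ((a : ℝ) * b - 1) * E)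
      else if s = t then (b : ℝ) - E
      else (b : ℝ) *
        (if (q2 : ℕ) / b = (((t - s : Fin (j * a + 1)) : ℕ) - 1) / j then (1:ℝ) else 0)
    with hF
  have key : ∀ r1 : Fin (j * a + 1),
      (∑ r2 : Fin (a * b), Mjoin a b j (onesMat (a * b) - 1) (p1, p2) (r1, r2) *
        Mjoin a b j (onesMat (a * b) - 1) (r1, r2) (q1, q2))
      = F (r1 - p1) := by
    intro r1
    have hqr : q1 - r1 = t - (r1 - p1) := by
      rw [ht]; exact (sub_sub_sub_cancel_right q1 r1 p1).symm
    simp only [Mjoin_apply, hF]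
    by_cases h1 : r1 - p1 = 0
    · by_cases h2 : q1 - r1 = 0
      · have htz : t = 0 := by rw [hqr, h1, sub_zero] at h2; exact h2
        simp only [if_pos h1, if_pos h2, if_pos htz]
        exact S4 a b p2 q2
      · have htne : t ≠ 0 := by
          intro hc; rw [hqr, hc, h1, sub_zero] at h2; exact h2 rfl
        have hqt : q1 - r1 = t := by rw [hqr, h1, sub_zero]
        simp only [hqt, if_pos h1, if_neg htne, ← hE]
        rw [← Finset.sum_mul, S1 a b p2]
    · by_cases h2 : q1 - r1 = 0
      · have hst : r1 - p1 = t := by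
          have h3 : t - (r1 - p1) = 0 := by rw [← hqr]; exact h2
          rw [sub_eq_zero] at h3; exact h3.symm
        have htne : t ≠ 0 := by rw [← hst]; exact h1
        simp only [if_neg h1, if_pos h2, hst, if_neg htne, eq_self_iff_true, if_true]
        rw [S3 a b hb _ (hiub a j ha hj t) q2, ← hE]
      · rw [hqr] at h2
        have hsnet : r1 - p1 ≠ t := by
          intro hc; rw [hc, sub_self] at h2; exact h2 rfl
        simp only [if_neg h1, hqr, if_neg h2, if_neg hsnet]
        rw [← Finset.sum_mul, sum_fin_div a b _ hb (hiub a j ha hj (r1 - p1))]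
  rw [Finset.sum_congr rfl (fun r1 _ => key r1)]
  rw [show (∑ r1 : Fin (j * a + 1), F (r1 - p1)) = ∑ s : Fin (j * a + 1), F s from
    Fintype.sum_equiv (Equiv.subRight p1) _ _ (fun x => rfl)]
  have hCsum : ∑ s : Fin (j * a + 1),
      ((b : ℝ) * (if (q2 : ℕ) / b = (((t - s : Fin (j * a + 1)) : ℕ) - 1) / j then (1:ℝ) else 0))
      = (b : ℝ) * ((if (q2 : ℕ) / b = 0 then (1:ℝ) else 0) + (j : ℝ)) := by
    rw [show (∑ s : Fin (j * a + 1),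
        ((b : ℝ) * (if (q2 : ℕ) / b = (((t - s : Fin (j * a + 1)) : ℕ) - 1) / j then (1:ℝ) else 0)))
        = ∑ u : Fin (j * a + 1),
        ((b : ℝ) * (if (q2 : ℕ) / b = ((u : ℕ) - 1) / j then (1:ℝ) else 0)) from
      Fintype.sum_equiv (Equiv.subLeft t) _ _ (fun x => rfl)]
    rw [← Finset.mul_sum]
    congr 1
    have hpt : ∀ u : Fin (j * a + 1),
        (if (q2 : ℕ) / b = ((u : ℕ) - 1) / j then (1:ℝ) else 0)
        = (if u = 0 then (if (q2 : ℕ) / b = 0 then (1:ℝ) else 0)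
           else if ((u : ℕ) - 1) / j = (q2 : ℕ) / b then (1:ℝ) else 0) := by
      intro u
      by_cases hu : u = 0
      · subst hu; norm_num
      · rw [if_neg hu]
        by_cases hc : (q2 : ℕ) / b = ((u : ℕ) - 1) / j
        · rw [if_pos hc, if_pos hc.symm]
        · rw [if_neg hc, if_neg (Ne.symm hc)]
    rw [Finset.sum_congr rfl (fun u _ => hpt u),
      sum_fin_shift a j ((q2 : ℕ) / b) hj (hq2lt a b hb q2) _ 1]
    ring
  by_cases htz : t = 0
  · rw [if_pos htz]
    have hsplit : ∀ s : Fin (j * a + 1),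
        F s
        = (if s = 0 then
            ((a : ℝ) * b - 2 + (if p2 = q2 then (1:ℝ) else 0)
              - (b : ℝ) *
                (if (q2 : ℕ) / b = (((t - s : Fin (j * a + 1)) : ℕ) - 1) / j then (1:ℝ) else 0))
           else 0)
          + (b : ℝ) *
            (if (q2 : ℕ) / b = (((t - s : Fin (j * a + 1)) : ℕ) - 1) / j then (1:ℝ) else 0) := by
      intro s
      simp only [hF]
      by_cases hs : s = 0
      · simp only [if_pos hs, if_pos htz]; ring
      · have hsnt : s ≠ t := by rw [htz]; exact hs
        simp only [if_neg hs, if_neg hsnt]; ring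
    rw [Finset.sum_congr rfl (fun s _ => hsplit s), Finset.sum_add_distrib, hCsum]
    rw [Finset.sum_ite_eq' Finset.univ (0 : Fin (j * a + 1))]
    simp only [Finset.mem_univ, if_true, htz, sub_zero, sub_self, Fin.val_zero,
      Nat.zero_sub, Nat.zero_div]
    ring
  · rw [if_neg htz]
    have hsplit : ∀ s : Fin (j * a + 1),
        F s
        = (if s = 0 then
            (((a : ℝ) * b - 1) * E
              - (b : ℝ) *
                (if (q2 : ℕ) / b = (((t - s : Fin (j * a + 1)) : ℕ) - 1) / j then (1:ℝ) else 0))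
           else 0)
          + (if s = t then
              (((b : ℝ) - E)
                - (b : ℝ) *
                  (if (q2 : ℕ) / b = (((t - s : Fin (j * a + 1)) : ℕ) - 1) / j then (1:ℝ) else 0))
             else 0)
          + (b : ℝ) *
            (if (q2 : ℕ) / b = (((t - s : Fin (j * a + 1)) : ℕ) - 1) / j then (1:ℝ) else 0) := by
      intro s
      simp only [hF]
      by_cases hs : s = 0
      · have hsnt : s ≠ t := by rw [hs]; exact fun hc => htz hc.symm
        simp only [if_pos hs, if_neg htz, if_neg hsnt]; ring
      · by_cases hst : s = t
        · simp only [if_neg hs, if_pos hst]; ring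
        · simp only [if_neg hs, if_neg hst]; ring
    rw [Finset.sum_congr rfl (fun s _ => hsplit s), Finset.sum_add_distrib,
      Finset.sum_add_distrib, hCsum]
    rw [Finset.sum_ite_eq' Finset.univ (0 : Fin (j * a + 1)),
      Finset.sum_ite_eq' Finset.univ t]
    simp only [Finset.mem_univ, if_true, sub_zero, sub_self, Fin.val_zero,
      Nat.zero_sub, Nat.zero_div, ← hE]
    ring
lemma rowsum (a b j : ℕ) (ha : 0 < a) (hb : 0 < b) (hj : 0 < j)
    (p1 : Fin (j * a + 1)) (p2 : Fin (a * b)) :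
    ∑ r : Fin (j * a + 1) × Fin (a * b),
      Mjoin a b j (onesMat (a * b) - 1) (p1, p2) r
      = (j : ℝ) * a * b + (a : ℝ) * b - 1 := by
  rw [Fintype.sum_prod_type]
  have key : ∀ r1 : Fin (j * a + 1),
      (∑ r2 : Fin (a * b), Mjoin a b j (onesMat (a * b) - 1) (p1, p2) (r1, r2))
      = (fun s : Fin (j * a + 1) => if s = 0 then (a : ℝ) * b - 1 else (b : ℝ)) (r1 - p1) := by
    intro r1
    simp only [Mjoin_apply]
    by_cases h : r1 - p1 = 0
    · simp only [if_pos h]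
      exact S1 a b p2
    · simp only [if_neg h]
      exact sum_fin_div a b _ hb (hiub a j ha hj (r1 - p1))
  rw [Finset.sum_congr rfl (fun r1 _ => key r1)]
  rw [show (∑ r1 : Fin (j * a + 1),
      (fun s : Fin (j * a + 1) => if s = 0 then (a : ℝ) * b - 1 else (b : ℝ)) (r1 - p1))
      = ∑ s : Fin (j * a + 1), (if s = 0 then (a : ℝ) * b - 1 else (b : ℝ)) from
    Fintype.sum_equiv (Equiv.subRight p1) _ _ (fun x => rfl)]
  have hsplit : ∀ s : Fin (j * a + 1),
      (if s = 0 then (a : ℝ) * b - 1 else (b : ℝ))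
      = (if s = 0 then ((a : ℝ) * b - 1 - b) else 0) + b := by
    intro s; by_cases hs : s = 0 <;> simp [hs]
  rw [Finset.sum_congr rfl (fun s _ => hsplit s), Finset.sum_add_distrib,
    Finset.sum_ite_eq' Finset.univ (0 : Fin (j * a + 1)), Finset.sum_const,
    Finset.card_univ, Fintype.card_fin]
  simp only [Finset.mem_univ, if_true, nsmul_eq_mul]
  push_cast
  ring

lemma colsum (a b j : ℕ) (ha : 0 < a) (hb : 0 < b) (hj : 0 < j)
    (q1 : Fin (j * a + 1)) (q2 : Fin (a * b)) :
    ∑ r : Fin (j * a + 1) × Fin (a * b),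
      Mjoin a b j (onesMat (a * b) - 1) r (q1, q2)
      = (j : ℝ) * a * b + (a : ℝ) * b - 1 := by
  rw [Fintype.sum_prod_type]
  have key : ∀ r1 : Fin (j * a + 1),
      (∑ r2 : Fin (a * b), Mjoin a b j (onesMat (a * b) - 1) (r1, r2) (q1, q2))
      = (fun s : Fin (j * a + 1) => if s = 0 then (a : ℝ) * b - 1
          else if ((s : ℕ) - 1) / j = (q2 : ℕ) / b then ((a : ℝ) * b) else 0) (q1 - r1) := by
    intro r1
    simp only [Mjoin_apply]
    by_cases h : q1 - r1 = 0
    · simp only [if_pos h]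
      exact S1' a b q2
    · simp only [if_neg h]
      rw [Finset.sum_const, Finset.card_univ, Fintype.card_fin]
      by_cases hc : ((q2 : ℕ) / b) = (((q1 - r1 : Fin (j * a + 1)) : ℕ) - 1) / j
      · rw [if_pos hc, if_pos hc.symm, nsmul_eq_mul]
        push_cast; ring
      · rw [if_neg hc, if_neg (Ne.symm hc), smul_zero]
  rw [Finset.sum_congr rfl (fun r1 _ => key r1)]
  rw [show (∑ r1 : Fin (j * a + 1),
      (fun s : Fin (j * a + 1) => if s = 0 then (a : ℝ) * b - 1
        else if ((s : ℕ) - 1) / j = (q2 : ℕ) / b then ((a : ℝ) * b) else 0) (q1 - r1))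
      = ∑ s : Fin (j * a + 1), (if s = 0 then (a : ℝ) * b - 1
        else if ((s : ℕ) - 1) / j = (q2 : ℕ) / b then ((a : ℝ) * b) else 0) from
    Fintype.sum_equiv (Equiv.subLeft q1) _ _ (fun x => rfl)]
  rw [sum_fin_shift a j ((q2 : ℕ) / b) hj (hq2lt a b hb q2) ((a : ℝ) * b - 1) ((a : ℝ) * b)]
  ring

/-- π-join of the complete graph `K_{ab}` (adjacency matrix `J − I`) with the
homogeneous partition into `a` cells of size `b`: for any positive integer `j`
the π-join `M_j(J−I)` is a DSRG with parameter set
`(ja²b + ab, jab + ab − 1, jb + ab − 1, jb + ab − 2, jb + b)`. -/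
theorem pijoin_complete_graph (a b j : ℕ) (ha : 0 < a) (hb : 0 < b) (hj : 0 < j) :
    Fintype.card (Fin (j * a + 1) × Fin (a * b)) = j * a ^ 2 * b + a * b ∧
    (∀ p q, Mjoin a b j (onesMat (a * b) - 1) p q = 0 ∨
            Mjoin a b j (onesMat (a * b) - 1) p q = 1) ∧
    (∀ p, Mjoin a b j (onesMat (a * b) - 1) p p = 0) ∧
    Mjoin a b j (onesMat (a * b) - 1) * Jbig (j * a + 1) (a * b)
      = ((j : ℝ) * a * b + (a : ℝ) * b - 1) • Jbig (j * a + 1) (a * b) ∧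
    Jbig (j * a + 1) (a * b) * Mjoin a b j (onesMat (a * b) - 1)
      = ((j : ℝ) * a * b + (a : ℝ) * b - 1) • Jbig (j * a + 1) (a * b) ∧
    Mjoin a b j (onesMat (a * b) - 1) * Mjoin a b j (onesMat (a * b) - 1)
      = ((j : ℝ) * b + (a : ℝ) * b - 1) • (1 : Matrix (Fin (j * a + 1) × Fin (a * b))
            (Fin (j * a + 1) × Fin (a * b)) ℝ)
        + ((j : ℝ) * b + (a : ℝ) * b - 2) • Mjoin a b j (onesMat (a * b) - 1)
        + ((j : ℝ) * b + (b : ℝ)) • (Jbig (j * a + 1) (a * b) - 1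
            - Mjoin a b j (onesMat (a * b) - 1)) := by
  refine ⟨?_, ?_, ?_, ?_, ?_, ?_⟩
  · simp only [Fintype.card_prod, Fintype.card_fin]
    ring
  · rintro ⟨p1, p2⟩ ⟨q1, q2⟩
    rw [Mjoin_apply]
    by_cases h : q1 - p1 = 0
    · rw [if_pos h]
      by_cases hp : p2 = q2
      · left; rw [if_pos hp]; ring
      · right; rw [if_neg hp]; ring
    · rw [if_neg h]
      by_cases hc : (q2 : ℕ) / b = (((q1 - p1 : Fin (j * a + 1)) : ℕ) - 1) / j
      · right; rw [if_pos hc]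
      · left; rw [if_neg hc]
  · rintro ⟨p1, p2⟩
    rw [Mjoin_apply, if_pos (sub_self p1), if_pos rfl]
    ring
  · ext ⟨p1, p2⟩ ⟨q1, q2⟩
    rw [Matrix.mul_apply]
    simp only [Jbig, Matrix.of_apply, mul_one, Matrix.smul_apply, smul_eq_mul]
    exact rowsum a b j ha hb hj p1 p2
  · ext ⟨p1, p2⟩ ⟨q1, q2⟩
    rw [Matrix.mul_apply]
    simp only [Jbig, Matrix.of_apply, one_mul, Matrix.smul_apply, smul_eq_mul, mul_one]
    exact colsum a b j ha hb hj q1 q2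
  · ext ⟨p1, p2⟩ ⟨q1, q2⟩
    rw [Matrix.mul_apply, M2sum a b j ha hb hj p1 q1 p2 q2]
    simp only [Matrix.add_apply, Matrix.sub_apply, Matrix.smul_apply, Matrix.one_apply,
      Jbig, Matrix.of_apply, smul_eq_mul, Mjoin_apply, Prod.mk.injEq]
    by_cases h : q1 - p1 = 0
    · obtain rfl : q1 = p1 := sub_eq_zero.mp h
      rw [if_pos h, if_pos h]
      simp only [eq_self_iff_true, true_and]
      push_cast; ring
    · have hne : ¬(p1 = q1 ∧ p2 = q2) := by
        rintro ⟨h1, -⟩; exact h (by rw [h1, sub_self])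
      rw [if_neg h, if_neg h, if_neg hne]
      push_cast; ring
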